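/- Let σ > 0, x, μ ∈ ℝ, ρ = exp(-σ²/2), and n a natural number with n > √2/σ. Define g(x; μ, σ) = (1/(2π))·(1 + 2·∑_{k=1}^{∞} ρ^{k²} cos(k(x-μ))) and g_n(x; μ, σ) = (1/(2π))·(1 + 2·∑_{k=1}^{n} ρ^{k²} cos(k(x-μ))). Then |g_n(x; μ, σ) - g(x; μ, σ)| < exp(-n²σ²/2)/(√2·π·σ). -/

import Mathlib

noncomputable def gpdf (x μ σ : ℝ) : ℝ :=
  (1 / (2 * Real.pi)) *
    (1 + 2 * ∑' k : ℕ, Real.exp (-σ^2 / 2) ^ ((k+1)^2) * Real.cos ((k+1) * (x - μ)))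

noncomputable def gpdfTrunc (n : ℕ) (x μ σ : ℝ) : ℝ :=
  (1 / (2 * Real.pi)) *
    (1 + 2 * ∑ k ∈ Finset.Icc 1 n, Real.exp (-σ^2 / 2) ^ (k^2) * Real.cos (k * (x - μ)))

theorem gpdf_trunc_error (σ x μ : ℝ) (n : ℕ) (hσ : 0 < σ)
    (hn : (n : ℝ) > Real.sqrt 2 / σ) :
    |gpdfTrunc n x μ σ - gpdf x μ σ| <
      Real.exp (-(n:ℝ)^2 * σ^2 / 2) / (Real.sqrt 2 * Real.pi * σ) := by
  have hπ := Real.pi_pos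
  have hs2 : (0:ℝ) < Real.sqrt 2 := Real.sqrt_pos.mpr (by norm_num)
  set r := Real.exp (-σ^2 / 2) with hrdef
  have hr0 : 0 < r := Real.exp_pos _
  have hr1 : r < 1 := by rw [hrdef, Real.exp_lt_one_iff]; nlinarith
  set f : ℕ → ℝ := fun k => r ^ ((k+1)^2) * Real.cos (((k:ℝ)+1) * (x - μ)) with hfdef
  have hbound : ∀ k m, m ≤ (k+1)^2 → |f k| ≤ r ^ m := by
    intro k m hm
    rw [hfdef]
    simp only
    rw [abs_mul, abs_of_nonneg (pow_nonneg hr0.le _)]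
    calc r ^ ((k+1)^2) * |Real.cos (((k:ℝ)+1) * (x - μ))|
        ≤ r ^ ((k+1)^2) * 1 :=
          mul_le_mul_of_nonneg_left (Real.abs_cos_le_one _) (pow_nonneg hr0.le _)
      _ = r ^ ((k+1)^2) := mul_one _
      _ ≤ r ^ m := pow_le_pow_of_le_one hr0.le hr1.le hm
  have hsumf : Summable f := by
    apply Summable.of_norm_bounded (g := fun k => r ^ k)
      (summable_geometric_of_lt_one hr0.le hr1)
    intro k
    rw [Real.norm_eq_abs]
    exact hbound k k (by nlinarith)
  -- identify finite sum
  have hA : ∑ k ∈ Finset.Icc 1 n, r ^ (k^2) * Real.cos ((k:ℝ) * (x - μ))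
      = ∑ k ∈ Finset.range n, f k := by
    rw [show Finset.Icc 1 n = Finset.Ico 1 (n+1) by rfl,
      Finset.sum_Ico_eq_sum_range]
    simp only [Nat.add_sub_cancel]
    apply Finset.sum_congr rfl
    intro k _
    rw [hfdef]
    simp only
    congr 2
    · ring
    · push_cast; ring
  set T : ℝ := ∑' k : ℕ, f (k + n) with hT
  have hdiff : gpdfTrunc n x μ σ - gpdf x μ σ = -T / Real.pi := by
    rw [gpdfTrunc, gpdf, ← hrdef, hA]
    have hsum := Summable.sum_add_tsum_nat_add (f := f) n hsumf
    have htsum : (∑' k : ℕ, r ^ ((k+1)^2) * Real.cos (((k:ℝ)+1) * (x - μ))) = ∑' k, f k := by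
      apply tsum_congr; intro k; rw [hfdef]
    rw [htsum, ← hsum, ← hT]
    field_simp
    ring
  rw [hdiff]
  -- bound |T|
  set q : ℝ := r ^ (2*n+1) with hq
  have hq0 : 0 < q := pow_pos hr0 _
  have hq1 : q < 1 := pow_lt_one₀ hr0.le hr1 (by omega)
  have hpow : ∀ k : ℕ, r ^ (n^2 + (2*n+1)*(k+1)) = r ^ (n^2) * (q * q ^ k) := by
    intro k
    rw [pow_add, pow_mul, ← hq]; ring
  have hg : Summable (fun k : ℕ => r ^ (n^2) * (q * q ^ k)) :=
    ((summable_geometric_of_lt_one hq0.le hq1).mul_left q).mul_left _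
  have hle : ∀ k : ℕ, |f (k + n)| ≤ r ^ (n^2) * (q * q ^ k) := by
    intro k
    rw [← hpow]
    exact hbound (k + n) _ (by nlinarith)
  have habs : Summable (fun k : ℕ => |f (k + n)|) :=
    Summable.of_nonneg_of_le (fun k => abs_nonneg _) hle hg
  have hTbound : |T| ≤ r ^ (n^2) * (q * (1 - q)⁻¹) := by
    have h1 : |T| ≤ ∑' k : ℕ, |f (k + n)| := by
      simpa [Real.norm_eq_abs] using
        norm_tsum_le_tsum_norm (f := fun k => f (k + n)) (by simpa [Real.norm_eq_abs] using habs)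
    have h2 : (∑' k : ℕ, |f (k + n)|) ≤ ∑' k : ℕ, r ^ (n^2) * (q * q ^ k) :=
      Summable.tsum_le_tsum hle habs hg
    have h3 : (∑' k : ℕ, r ^ (n^2) * (q * q ^ k)) = r ^ (n^2) * (q * (1 - q)⁻¹) := by
      rw [tsum_mul_left, tsum_mul_left, tsum_geometric_of_lt_one hq0.le hq1]
    linarith [h1, h2.trans_eq h3]
  -- key strict inequality
  have hnσ : Real.sqrt 2 < n * σ := by
    rwa [gt_iff_lt, div_lt_iff₀ hσ] at hn
  have h1q : 0 < 1 - q := by linarith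
  have hkey : q * (1 - q)⁻¹ < 1 / (Real.sqrt 2 * σ) := by
    have hA2 : Real.sqrt 2 * σ + 1 < Real.exp (Real.sqrt 2 * σ) :=
      Real.add_one_lt_exp (by positivity)
    have hB : Real.exp (Real.sqrt 2 * σ) ≤ Real.exp ((2*n+1) * (σ^2/2)) := by
      apply Real.exp_le_exp.mpr
      nlinarith
    have hqe : q = Real.exp (-((2*n+1) * (σ^2/2))) := by
      rw [hq, hrdef, ← Real.exp_nat_mul]
      congr 1
      push_cast
      ring
    have hqinv : q * Real.exp ((2*n+1) * (σ^2/2)) = 1 := by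
      rw [hqe, ← Real.exp_add]; simp
    have h4 : q * (Real.sqrt 2 * σ + 1) < 1 := by
      calc q * (Real.sqrt 2 * σ + 1) < q * Real.exp ((2*n+1) * (σ^2/2)) :=
            mul_lt_mul_of_pos_left (lt_of_lt_of_le hA2 hB) hq0
        _ = 1 := hqinv
    rw [← div_eq_mul_inv, div_lt_div_iff₀ h1q (by positivity), one_mul]
    nlinarith
  -- assemble
  have hrn : r ^ (n^2) = Real.exp (-(n:ℝ)^2 * σ^2 / 2) := by
    rw [hrdef, ← Real.exp_nat_mul]
    congr 1
    push_cast
    ring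
  rw [abs_div, abs_neg, abs_of_pos hπ]
  calc |T| / Real.pi ≤ (r ^ (n^2) * (q * (1 - q)⁻¹)) / Real.pi := by gcongr
    _ < (r ^ (n^2) * (1 / (Real.sqrt 2 * σ))) / Real.pi := by
        gcongr
    _ = Real.exp (-(n:ℝ)^2 * σ^2 / 2) / (Real.sqrt 2 * Real.pi * σ) := by
        rw [hrn]; field_simp
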